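/- Let A be a nonzero commutative radical complex Banach algebra and let A_e be its unitization with the norm ‖a + λe‖₁ = ‖a‖ + |λ|. Then there exists a normalized state f on A_e which is not a spectral state, i.e., there exist f ∈ D(A_e, e) and x ∈ A_e with f(x) ∉ co(sp(x)). (This disproves the claim that every normalized state on a unital complex Banach algebra is a spectral state.) -/

import Mathlib

open Unitization WithLp

/-- The element `a` of `A`, viewed as the element `a + 0·e` of the unitization
`A_e = WithLp 1 (Unitization ℂ A)` equipped with the norm `‖a + λe‖₁ = ‖a‖ + |λ|`. -/
noncomputable def inrL1 {A : Type*} [NonUnitalNormedRing A] [NormedSpace ℂ A] (a : A) :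
    WithLp 1 (Unitization ℂ A) :=
  (WithLp.equiv 1 (Unitization ℂ A)).symm (Unitization.inr a)

/-- The functional `φ∞ : a + λ·e ↦ λ` on the ℓ¹-unitization, as a continuous linear map. -/
noncomputable def phiInf (A : Type*) [NonUnitalNormedRing A] [NormedSpace ℂ A]
    [IsScalarTower ℂ A A] [SMulCommClass ℂ A A] :
    WithLp 1 (Unitization ℂ A) →L[ℂ] ℂ :=
  LinearMap.mkContinuous
    ((Unitization.fstHom ℂ A).toLinearMap ∘ₗ (WithLp.linearEquiv 1 ℂ (Unitization ℂ A)).toLinearMap)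
    1
    (fun x => by
      rw [one_mul, WithLp.unitization_norm_def]
      simpa using le_add_of_nonneg_right (norm_nonneg _))

/-- If `A` is a nonzero commutative radical complex Banach algebra and `A_e` its unitization
with the norm `‖a + λe‖₁ = ‖a‖ + |λ|`, then there exists a normalized state `f` on `A_e`
(a continuous linear functional with `f(e) = ‖f‖ = 1`) which is not a spectral state:
there is an `x ∈ A_e` with `f(x) ∉ co(sp(x))`. -/
theorem exists_state_not_spectral_state
    {A : Type*} [NonUnitalNormedCommRing A] [NormedSpace ℂ A]
    [IsScalarTower ℂ A A] [SMulCommClass ℂ A A] [CompleteSpace A] [Nontrivial A]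
    (hrad : ∀ a : A, quasispectrum ℂ a = {0}) :
    ∃ f : WithLp 1 (Unitization ℂ A) →L[ℂ] ℂ,
      (f 1 = 1 ∧ ‖f‖ = 1) ∧
        ∃ x : WithLp 1 (Unitization ℂ A), f x ∉ convexHull ℝ (spectrum ℂ x) := by
  obtain ⟨a, ha⟩ := exists_ne (0 : A)
  obtain ⟨g, hg1, hga⟩ := exists_dual_vector ℂ a (norm_ne_zero_iff.mpr ha)
  set L : WithLp 1 (Unitization ℂ A) →ₗ[ℂ] ℂ :=
    ((Unitization.fstHom ℂ A).toLinearMap + g.toLinearMap ∘ₗ Unitization.sndHom ℂ ℂ A) ∘ₗ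
      (WithLp.linearEquiv 1 ℂ (Unitization ℂ A)).toLinearMap with hL
  have hbound : ∀ x : WithLp 1 (Unitization ℂ A), ‖L x‖ ≤ 1 * ‖x‖ := by
    intro x
    rw [one_mul, WithLp.unitization_norm_def, hL]
    simp only [LinearMap.coe_comp, Function.comp_apply, LinearMap.add_apply,
      AlgHom.toLinearMap_apply, LinearEquiv.coe_coe, ContinuousLinearMap.coe_coe]
    refine (norm_add_le _ _).trans (add_le_add le_rfl ?_)
    calc ‖g ((Unitization.sndHom ℂ ℂ A) (WithLp.equiv 1 _ x))‖
        ≤ ‖g‖ * ‖(Unitization.sndHom ℂ ℂ A) (WithLp.equiv 1 _ x)‖ := g.le_opNorm _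
      _ = ‖(WithLp.equiv 1 _ x).snd‖ := by rw [hg1, one_mul]; rfl
  refine ⟨LinearMap.mkContinuous L 1 hbound, ⟨?_, ?_⟩, ?_⟩
  · show L 1 = 1
    rw [hL]
    simp [WithLp.linearEquiv, WithLp.equiv]
    show (1 : Unitization ℂ A).fst + g (1 : Unitization ℂ A).snd = 1
    simp
  · refine le_antisymm (LinearMap.mkContinuous_norm_le L zero_le_one hbound) ?_
    have h1 : ‖(1 : WithLp 1 (Unitization ℂ A))‖ = 1 := by
      rw [WithLp.unitization_norm_def]
      show ‖(1 : Unitization ℂ A).fst‖ + ‖(1 : Unitization ℂ A).snd‖ = 1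
      simp
    have := (LinearMap.mkContinuous L 1 hbound).le_opNorm 1
    rw [h1, mul_one] at this
    have hL1 : (LinearMap.mkContinuous L 1 hbound) 1 = 1 := by
      show L 1 = 1
      rw [hL]
      simp [WithLp.linearEquiv, WithLp.equiv]
      show (1 : Unitization ℂ A).fst + g (1 : Unitization ℂ A).snd = 1
      simp
    rw [hL1] at this
    simpa using this
  · refine ⟨(WithLp.equiv 1 (Unitization ℂ A)).symm (1 + Unitization.inr a), ?_⟩
    have hspec : spectrum ℂ ((WithLp.equiv 1 (Unitization ℂ A)).symm
        (1 + Unitization.inr a)) = {1} := by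
      have h0 : spectrum ℂ ((Unitization.inr a : Unitization ℂ A)) = {0} := by
        rw [← Unitization.quasispectrum_eq_spectrum_inr ℂ a, hrad]
      have : spectrum ℂ ((1 + Unitization.inr a : Unitization ℂ A)) = {1} := by
        have := spectrum.singleton_add_eq (R := ℂ) (Unitization.inr a : Unitization ℂ A) 1
        rw [h0, map_one] at this
        rw [← this]
        simp [Set.singleton_add_singleton]
      rw [← this]
      exact AlgEquiv.spectrum_eq (WithLp.unitizationAlgEquiv (𝕜 := ℂ) (A := A) ℂ).symm _
    rw [hspec, convexHull_singleton]
    have hfx : (LinearMap.mkContinuous L 1 hbound)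
        ((WithLp.equiv 1 (Unitization ℂ A)).symm (1 + Unitization.inr a)) = 1 + ‖a‖ := by
      show L _ = _
      rw [hL]
      simp only [LinearMap.coe_comp, Function.comp_apply, LinearMap.add_apply,
        AlgHom.toLinearMap_apply, LinearEquiv.coe_coe, ContinuousLinearMap.coe_coe]
      have he : (WithLp.linearEquiv 1 ℂ (Unitization ℂ A))
          ((WithLp.equiv 1 (Unitization ℂ A)).symm (1 + Unitization.inr a))
          = 1 + Unitization.inr a := rfl
      rw [he]
      simp [hga]
    rw [hfx]
    simp only [Set.mem_singleton_iff]
    intro h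
    have : (‖a‖ : ℂ) = 0 := by linear_combination h
    simp only [Complex.ofReal_eq_zero, norm_eq_zero] at this
    exact ha this
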